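/- Let f : (0,∞) → ℝ be concave with sign(f(x)) = sign(x−1) for all x > 0, and suppose x ↦ f(1/x) is integrable over (0,1]. Then for every q ∈ (0,1) and x > 0, the series F(x,q) := ∑_{k=0}^∞ q^k f(q^{−k} x) converges, and satisfies (q/(1−q)) ∫₀^{1/q} f(x/t) dt ≤ F(x,q) ≤ (1/(1−q)) ∫₀¹ f(x/t) dt. -/

import Mathlib

open MeasureTheory

/-- Convergence and two-sided integral estimates for
`F(x,q) = ∑_{k=0}^∞ q^k f(q^{-k} x)`. -/
theorem stmt_8 (f : ℝ → ℝ) (hconc : ConcaveOn ℝ (Set.Ioi 0) f)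
    (hneg : ∀ x : ℝ, 0 < x → x < 1 → f x < 0)
    (hone : f 1 = 0)
    (hposf : ∀ x : ℝ, 1 < x → 0 < f x)
    (hint : IntegrableOn (fun t => f (1 / t)) (Set.Ioc 0 1)) :
    ∀ q : ℝ, 0 < q → q < 1 → ∀ x : ℝ, 0 < x →
      Summable (fun k : ℕ => q ^ k * f (x / q ^ k)) ∧
      (q / (1 - q)) * ∫ t in Set.Ioc (0:ℝ) (1 / q), f (x / t) ≤
        (∑' k : ℕ, q ^ k * f (x / q ^ k)) ∧
      (∑' k : ℕ, q ^ k * f (x / q ^ k)) ≤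
        (1 / (1 - q)) * ∫ t in Set.Ioc (0:ℝ) 1, f (x / t) := by
  -- f is monotone (nondecreasing) on (0, ∞)
  have hmono : ∀ a b : ℝ, 0 < a → a ≤ b → f a ≤ f b := by
    intro a b ha hab
    rcases eq_or_lt_of_le hab with rfl | hab'
    · exact le_rfl
    by_contra hlt
    push_neg at hlt
    have hb : 0 < b := ha.trans hab'
    set s : ℝ := (f b - f a) / (b - a) with hs
    have hsneg : s < 0 := div_neg_of_neg_of_pos (by linarith) (by linarith)
    set z : ℝ := max 2 (b + (|f b| + 1) / (-s)) with hzdef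
    have hposd : 0 < (|f b| + 1) / (-s) := div_pos (by positivity) (by linarith)
    have hbz : b < z := lt_of_lt_of_le (by linarith) (le_max_right _ _)
    have hz2 : (2:ℝ) ≤ z := le_max_left _ _
    have hslope := hconc.slope_anti_adjacent (Set.mem_Ioi.2 ha)
      (Set.mem_Ioi.2 (lt_trans hb hbz)) hab' hbz
    -- hslope : (f z - f b) / (z - b) ≤ (f b - f a) / (b - a)
    have hzb : 0 < z - b := by linarith
    have h1 : f z - f b ≤ s * (z - b) := by
      have := (div_le_iff₀ hzb).1 hslope
      linarith [this]
    have h2 : s * (z - b) ≤ s * ((|f b| + 1) / (-s)) := by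
      apply mul_le_mul_of_nonpos_left _ hsneg.le
      have : b + (|f b| + 1) / (-s) ≤ z := le_max_right _ _
      linarith
    have h3 : s * ((|f b| + 1) / (-s)) = -(|f b| + 1) := by
      rw [div_neg, mul_neg, ← mul_div_assoc, mul_div_cancel_left₀ _ hsneg.ne]
    have hfzneg : f z < 0 := by
      have : f z ≤ f b - |f b| - 1 := by linarith [h1, h2, h3.le]
      have habs : f b ≤ |f b| := le_abs_self _
      linarith
    exact absurd (hposf z (by linarith)) (not_lt.2 hfzneg.le)
  intro q hq hq1 x hx
  have h1q : 0 < 1 - q := by linarith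
  set g : ℝ → ℝ := fun t => f (x / t) with hgdef
  have hganti : ∀ s t : ℝ, 0 < s → s ≤ t → g t ≤ g s := by
    intro s t hs hst
    have ht : 0 < t := hs.trans_le hst
    exact hmono (x / t) (x / s) (div_pos hx ht) (by gcongr)
  -- integrability of g on (0, x]
  have hgx : IntegrableOn g (Set.Ioc 0 x) := by
    have h1 : IntervalIntegrable (fun t => f (1 / t)) volume 0 1 :=
      (intervalIntegrable_iff_integrableOn_Ioc_of_le zero_le_one).2 hint
    have h2 := h1.comp_mul_left (c := x⁻¹)
    have heq : (fun t => f (1 / (x⁻¹ * t))) = g := by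
      funext t
      simp [hgdef, one_div, mul_inv, inv_inv, div_eq_mul_inv, mul_comm]
    rw [heq, zero_div, one_div, inv_inv] at h2
    exact (intervalIntegrable_iff_integrableOn_Ioc_of_le hx.le).1 h2
  have hgint : ∀ c : ℝ, 0 < c → IntegrableOn g (Set.Ioc 0 c) := by
    intro c hc
    rcases le_total c x with h | h
    · exact hgx.mono_set (Set.Ioc_subset_Ioc_right h)
    · have hanti : AntitoneOn g (Set.Icc x c) := fun s hs t _ hst => hganti s t (lt_of_lt_of_le hx hs.1) hst
      have hcompact : IntegrableOn g (Set.Icc x c) := AntitoneOn.integrableOn_isCompact isCompact_Icc hanti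
      have hsplit : Set.Ioc 0 c = Set.Ioc 0 x ∪ Set.Ioc x c := (Set.Ioc_union_Ioc_eq_Ioc hx.le h).symm
      rw [hsplit]
      exact hgx.union (hcompact.mono_set Set.Ioc_subset_Icc_self)
  have hgii : ∀ a b : ℝ, 0 ≤ a → a ≤ b → IntervalIntegrable g volume a b := by
    intro a b ha hab
    refine (intervalIntegrable_iff_integrableOn_Ioc_of_le hab).2 ?_
    refine (hgint (max b 1) (lt_of_lt_of_le one_pos (le_max_right b 1))).mono_set ?_
    exact Set.Ioc_subset_Ioc ha (le_max_left b 1)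
  have hqk : ∀ k : ℕ, 0 < q ^ k := fun k => pow_pos hq k
  have hqk1 : ∀ k : ℕ, q ^ k ≤ 1 := by
    intro k
    simpa using pow_le_pow_of_le_one hq.le hq1.le (Nat.zero_le k)
  have hqsucc : ∀ k : ℕ, q ^ (k + 1) ≤ q ^ k := fun k =>
    pow_le_pow_of_le_one hq.le hq1.le (Nat.le_succ k)
  -- block bounds
  have hblockU : ∀ k : ℕ, (q ^ k - q ^ (k + 1)) * g (q ^ k) ≤ ∫ t in (q ^ (k + 1))..(q ^ k), g t := by
    intro k
    have h := intervalIntegral.integral_mono_on (μ := volume) (hqsucc k)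
      (intervalIntegrable_const (c := g (q ^ k))) (hgii _ _ (hqk (k + 1)).le (hqsucc k))
      (fun t ht => hganti t (q ^ k) (lt_of_lt_of_le (hqk (k + 1)) ht.1) ht.2)
    rwa [intervalIntegral.integral_const, smul_eq_mul] at h
  have hblockL : ∀ k : ℕ, (∫ t in (q ^ (k + 1))..(q ^ k), g t) ≤ (q ^ k - q ^ (k + 1)) * g (q ^ (k + 1)) := by
    intro k
    have h := intervalIntegral.integral_mono_on (μ := volume) (hqsucc k)
      (hgii _ _ (hqk (k + 1)).le (hqsucc k)) (intervalIntegrable_const (c := g (q ^ (k + 1))))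
      (fun t ht => hganti (q ^ (k + 1)) t (hqk (k + 1)) ht.1)
    rwa [intervalIntegral.integral_const, smul_eq_mul] at h
  -- partial-sum lower estimate on the integral over (q^n, 1]
  have hTn : ∀ n : ℕ, (1 - q) * (∑ k ∈ Finset.range n, q ^ k * g (q ^ k)) ≤ ∫ t in (q ^ n)..1, g t := by
    intro n
    induction n with
    | zero => simp
    | succ n ih =>
      have hadd : (∫ t in (q ^ (n + 1))..(q ^ n), g t) + ∫ t in (q ^ n)..1, g t
          = ∫ t in (q ^ (n + 1))..1, g t :=
        intervalIntegral.integral_add_adjacent_intervals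
          (hgii _ _ (hqk (n + 1)).le (hqsucc n)) (hgii _ _ (hqk n).le (hqk1 n))
      have hb := hblockU n
      have heq : (q ^ n - q ^ (n + 1)) * g (q ^ n) = (1 - q) * (q ^ n * g (q ^ n)) := by
        rw [pow_succ]; ring
      rw [Finset.sum_range_succ, mul_add]
      calc (1 - q) * (∑ k ∈ Finset.range n, q ^ k * g (q ^ k)) + (1 - q) * (q ^ n * g (q ^ n))
          ≤ (∫ t in (q ^ n)..1, g t) + (∫ t in (q ^ (n + 1))..(q ^ n), g t) := by
            rw [← heq]; exact add_le_add ih hb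
        _ = ∫ t in (q ^ (n + 1))..1, g t := by rw [add_comm]; exact hadd
  -- partial-sum upper estimate on the integral over (q^n, 1/q]
  have hSn : ∀ n : ℕ, q * ∫ t in (q ^ n)..(1 / q), g t
      ≤ (1 - q) * ∑ k ∈ Finset.range (n + 1), q ^ k * g (q ^ k) := by
    intro n
    have h1q' : (1:ℝ) ≤ 1 / q := (le_div_iff₀ hq).2 (by linarith)
    induction n with
    | zero =>
      have h := intervalIntegral.integral_mono_on (μ := volume) h1q'
        (hgii _ _ zero_le_one h1q') (intervalIntegrable_const (c := g 1))
        (fun t ht => hganti 1 t one_pos ht.1)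
      rw [intervalIntegral.integral_const, smul_eq_mul] at h
      have : q * ∫ t in (1:ℝ)..(1 / q), g t ≤ q * ((1 / q - 1) * g 1) :=
        mul_le_mul_of_nonneg_left h hq.le
      have heq : q * ((1 / q - 1) * g 1) = (1 - q) * g 1 := by field_simp
      simpa using this.trans_eq heq
    | succ n ih =>
      have hqn : q ^ n ≤ 1 / q := (hqk1 n).trans h1q'
      have hadd : (∫ t in (q ^ (n + 1))..(q ^ n), g t) + ∫ t in (q ^ n)..(1 / q), g t
          = ∫ t in (q ^ (n + 1))..(1 / q), g t :=
        intervalIntegral.integral_add_adjacent_intervals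
          (hgii _ _ (hqk (n + 1)).le (hqsucc n)) (hgii _ _ (hqk n).le hqn)
      have hb := hblockL n
      have heq : q * ((q ^ n - q ^ (n + 1)) * g (q ^ (n + 1)))
          = (1 - q) * (q ^ (n + 1) * g (q ^ (n + 1))) := by
        rw [pow_succ]; ring
      calc q * ∫ t in (q ^ (n + 1))..(1 / q), g t
          = q * (∫ t in (q ^ (n + 1))..(q ^ n), g t) + q * ∫ t in (q ^ n)..(1 / q), g t := by
            rw [← mul_add, hadd]
        _ ≤ (1 - q) * (q ^ (n + 1) * g (q ^ (n + 1)))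
            + (1 - q) * ∑ k ∈ Finset.range (n + 1), q ^ k * g (q ^ k) := by
            refine add_le_add ?_ ih
            rw [← heq]
            exact mul_le_mul_of_nonneg_left hb hq.le
        _ = (1 - q) * ∑ k ∈ Finset.range (n + 2), q ^ k * g (q ^ k) := by
            conv_rhs => rw [Finset.sum_range_succ]
            ring
  -- choose N with q^N ≤ x
  obtain ⟨N, hN⟩ : ∃ n : ℕ, q ^ n < x := exists_pow_lt_of_lt_one hx hq1
  have hg0 : ∀ t : ℝ, 0 < t → t ≤ x → 0 ≤ g t := by
    intro t ht htx
    have h1 : (1:ℝ) ≤ x / t := (one_le_div ht).2 htx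
    calc (0:ℝ) = f 1 := hone.symm
      _ ≤ f (x / t) := hmono 1 (x / t) one_pos h1
  have hqNx : ∀ n : ℕ, N ≤ n → q ^ n ≤ x := fun n hn =>
    (pow_le_pow_of_le_one hq.le hq1.le hn).trans hN.le
  have hak0 : ∀ k : ℕ, N ≤ k → 0 ≤ q ^ k * g (q ^ k) := fun k hk =>
    mul_nonneg (hqk k).le (hg0 _ (hqk k) (hqNx k hk))
  -- nonnegativity of the head integral
  have hInt0 : ∀ n : ℕ, N ≤ n → 0 ≤ ∫ t in (0:ℝ)..(q ^ n), g t := by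
    intro n hn
    rw [intervalIntegral.integral_of_le (hqk n).le]
    exact setIntegral_nonneg measurableSet_Ioc fun t ht => hg0 t ht.1 (ht.2.trans (hqNx n hn))
  set I1 : ℝ := ∫ t in Set.Ioc (0:ℝ) 1, g t with hI1
  have hI1eq : I1 = ∫ t in (0:ℝ)..1, g t := (intervalIntegral.integral_of_le zero_le_one).symm
  -- uniform bound on partial sums for n ≥ N
  have hpart : ∀ n : ℕ, N ≤ n → (1 - q) * (∑ k ∈ Finset.range n, q ^ k * g (q ^ k)) ≤ I1 := by
    intro n hn
    have hadd : (∫ t in (0:ℝ)..(q ^ n), g t) + ∫ t in (q ^ n)..1, g t = ∫ t in (0:ℝ)..1, g t :=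
      intervalIntegral.integral_add_adjacent_intervals
        (hgii 0 (q ^ n) le_rfl (hqk n).le) (hgii _ _ (hqk n).le (hqk1 n))
    have := hTn n
    have h0 := hInt0 n hn
    rw [hI1eq]
    linarith
  -- summability
  have hsumm : Summable (fun k : ℕ => q ^ k * g (q ^ k)) := by
    rw [← summable_nat_add_iff N]
    apply summable_of_sum_range_le (c := I1 / (1 - q) - ∑ k ∈ Finset.range N, q ^ k * g (q ^ k))
    · intro k
      exact hak0 (k + N) (Nat.le_add_left N k)
    · intro n
      have hsum : ∑ i ∈ Finset.range (N + n), q ^ i * g (q ^ i)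
          = (∑ i ∈ Finset.range N, q ^ i * g (q ^ i)) + ∑ i ∈ Finset.range n, q ^ (N + i) * g (q ^ (N + i)) :=
        Finset.sum_range_add _ N n
      have hp := hpart (N + n) (Nat.le_add_right N n)
      have hle : ∑ i ∈ Finset.range (N + n), q ^ i * g (q ^ i) ≤ I1 / (1 - q) :=
        (le_div_iff₀ h1q).2 (by linarith)
      have : ∑ i ∈ Finset.range n, q ^ (i + N) * g (q ^ (i + N))
          = ∑ i ∈ Finset.range n, q ^ (N + i) * g (q ^ (N + i)) := by
        apply Finset.sum_congr rfl
        intro i _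
        rw [add_comm]
      rw [this]
      linarith
  have hSn_tend : Filter.Tendsto (fun n : ℕ => ∑ k ∈ Finset.range n, q ^ k * g (q ^ k))
      Filter.atTop (nhds (∑' k : ℕ, q ^ k * g (q ^ k))) := hsumm.hasSum.tendsto_sum_nat
  -- upper bound on the tsum
  have hupper : (∑' k : ℕ, q ^ k * g (q ^ k)) ≤ (1 / (1 - q)) * I1 := by
    refine le_of_tendsto hSn_tend ?_
    filter_upwards [Filter.eventually_ge_atTop N] with n hn
    have := hpart n hn
    rw [div_mul_eq_mul_div, one_mul, le_div_iff₀ h1q]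
    linarith
  -- limit of head integrals is 0
  have hhead : Filter.Tendsto (fun n : ℕ => ∫ t in Set.Ioc (0:ℝ) (q ^ n), g t)
      Filter.atTop (nhds 0) := by
    have hiInter : (⋂ n : ℕ, Set.Ioc (0:ℝ) (q ^ n)) = ∅ := by
      ext t
      simp only [Set.mem_iInter, Set.mem_Ioc, Set.mem_empty_iff_false, iff_false]
      intro h
      obtain ⟨n, hn⟩ := exists_pow_lt_of_lt_one (h 0).1 hq1
      exact absurd (h n).2 (not_le.2 hn)
    have h := tendsto_setIntegral_of_antitone (μ := volume) (f := g)
      (s := fun n : ℕ => Set.Ioc (0:ℝ) (q ^ n)) (fun n => measurableSet_Ioc)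
      (fun n m hnm => Set.Ioc_subset_Ioc_right (pow_le_pow_of_le_one hq.le hq1.le hnm))
      ⟨0, by simpa using hgint 1 one_pos⟩
    rwa [hiInter, Measure.restrict_empty, integral_zero_measure] at h
  -- lower bound on the tsum
  set Iq : ℝ := ∫ t in Set.Ioc (0:ℝ) (1 / q), g t with hIq
  have h1q' : (1:ℝ) ≤ 1 / q := (le_div_iff₀ hq).2 (by linarith)
  have hIqeq : Iq = ∫ t in (0:ℝ)..(1 / q), g t :=
    (intervalIntegral.integral_of_le (by linarith)).symm
  have hlower : (q / (1 - q)) * Iq ≤ ∑' k : ℕ, q ^ k * g (q ^ k) := by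
    have hineq : ∀ n : ℕ, q * Iq - q * (∫ t in Set.Ioc (0:ℝ) (q ^ n), g t)
        ≤ (1 - q) * ∑ k ∈ Finset.range (n + 1), q ^ k * g (q ^ k) := by
      intro n
      have hqn : q ^ n ≤ 1 / q := (hqk1 n).trans h1q'
      have hadd : (∫ t in (0:ℝ)..(q ^ n), g t) + ∫ t in (q ^ n)..(1 / q), g t
          = ∫ t in (0:ℝ)..(1 / q), g t :=
        intervalIntegral.integral_add_adjacent_intervals
          (hgii 0 (q ^ n) le_rfl (hqk n).le) (hgii _ _ (hqk n).le hqn)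
      have h0eq : (∫ t in (0:ℝ)..(q ^ n), g t) = ∫ t in Set.Ioc (0:ℝ) (q ^ n), g t :=
        intervalIntegral.integral_of_le (hqk n).le
      have := hSn n
      rw [hIqeq, ← hadd, ← h0eq]
      nlinarith [hSn n]
    have htendL : Filter.Tendsto
        (fun n : ℕ => q * Iq - q * (∫ t in Set.Ioc (0:ℝ) (q ^ n), g t))
        Filter.atTop (nhds (q * Iq)) := by
      have := (hhead.const_mul q)
      simpa using (tendsto_const_nhds (x := q * Iq)).sub this
    have htendR : Filter.Tendsto
        (fun n : ℕ => (1 - q) * ∑ k ∈ Finset.range (n + 1), q ^ k * g (q ^ k))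
        Filter.atTop (nhds ((1 - q) * ∑' k : ℕ, q ^ k * g (q ^ k))) :=
      ((hSn_tend.comp (Filter.tendsto_add_atTop_nat 1)).const_mul (1 - q))
    have hle := le_of_tendsto_of_tendsto' htendL htendR hineq
    rw [div_mul_eq_mul_div, div_le_iff₀ h1q]
    linarith
  exact ⟨hsumm, hlower, hupper⟩
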